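/- arXiv:1401.0119 — 5 statements merged into one kernel-verified Lean document; each statement's English description precedes it below -/
import Mathlib

section
/- Let h_v(i) be the value of vertex v at iteration i of the simplified auction algorithm and let D_l(i) = {v ∈ V : h_v(i) ≥ l}. If v_0 ∈ D_l(i) and the edge (u, v_0) belongs to the matching M(i), then the entire neighbor set n_u of u is contained in D_{l-1}(i). -/
/-- A trace of the simplified auction algorithm on a bipartite graph with
parts `U`, `V` and edge set `E`.  `M i` is the partial matching and `h i` the
vector of vertex values at iteration `i`.  At each iteration, either all
persons are assigned (termination: nothing changes), or some free vertex
`u ∈ U` bids on a neighbor `j` of minimal value, `(u, j)` is added to the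
matching (unmatching `j`'s previous partner), and `h j` is incremented. -/
structure AuctionTrace (U V : Type*) (E : Set (U × V)) where
  M : ℕ → Set (U × V)
  h : ℕ → V → ℕ
  h_init : ∀ v, h 0 v = 0
  M_init : M 0 = ∅
  M_subset : ∀ i, M i ⊆ E
  step : ∀ i,
    ((∀ u, ∃ v, (u, v) ∈ M i) ∧ M (i + 1) = M i ∧ h (i + 1) = h i) ∨
    (∃ u j, (∀ v, (u, v) ∉ M i) ∧ (u, j) ∈ E ∧
      (∀ w, (u, w) ∈ E → h i j ≤ h i w) ∧
      M (i + 1) = insert (u, j) {e ∈ M i | e.2 ≠ j} ∧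
      h (i + 1) j = h i j + 1 ∧ ∀ w, w ≠ j → h (i + 1) w = h i w)


/-- If `v₀ ∈ D_l(i)` (i.e. `l ≤ h i v₀`) and the edge `(u, v₀)`
belongs to the matching `M i`, then the entire neighbor set of `u` is contained
in `D_{l-1}(i)`, i.e. `l - 1 ≤ h i w` for every neighbor `w` of `u`. -/
theorem neighbors_in_D_pred {U V : Type*} (E : Set (U × V))
    (t : AuctionTrace U V E) (i l : ℕ) (u : U) (v0 : V)
    (hv0 : l ≤ t.h i v0) (hM : (u, v0) ∈ t.M i) :
    ∀ w, (u, w) ∈ E → l - 1 ≤ t.h i w := by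
  have key : ∀ i u v0 w, (u, v0) ∈ t.M i → (u, w) ∈ E → t.h i v0 ≤ t.h i w + 1 := by
    intro i
    induction i with
    | zero =>
      intro u v0 w hM _
      rw [t.M_init] at hM
      exact absurd hM (Set.notMem_empty _)
    | succ n ih =>
      intro u v0 w hM hE
      rcases t.step n with ⟨_, hMeq, hh⟩ | ⟨u', j, hfree, hjE, hmin, hMeq, hj, hother⟩
      · rw [hMeq] at hM; rw [hh]; exact ih u v0 w hM hE
      · rw [hMeq] at hM
        rcases hM with heq | ⟨hMn, hne⟩
        · injection heq with h1 h2
          subst h1; subst h2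
          by_cases hw : w = v0
          · subst hw; omega
          · have := hmin w hE
            have := hother w hw
            omega
        · have hne' : v0 ≠ j := hne
          have h1 : t.h (n + 1) v0 = t.h n v0 := hother v0 hne'
          have h2 := ih u v0 w hMn hE
          by_cases hw : w = j
          · subst hw; omega
          · have := hother w hw; omega
  intro w hE
  have := key i u v0 w hM hE
  omega
end

section
/- If at iteration i of the simplified auction algorithm, u_0 ∈ U is a free vertex with n_{u_0} ⊆ D_l(i), then every augmenting path of M(i) starting at u_0 has length at least 2l+1. -/
/-- `M` is a matching: edges are pairwise vertex-disjoint. -/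
def IsMatching {U V : Type*} (M : Set (U × V)) : Prop :=
  (∀ u v v', (u, v) ∈ M → (u, v') ∈ M → v = v') ∧
  (∀ u u' v, (u, v) ∈ M → (u', v) ∈ M → u = u')

/-- An augmenting path of length `2 * m + 1` with respect to the matching `M`
in the bipartite graph with edges `E`: vertices
`u 0, v 0, u 1, v 1, …, u m, v m`, where each `(u i, v i)` is a non-matching
edge, each `(u (i+1), v i)` is a matching edge, the start `u 0 ∈ U` and the
end `v m ∈ V` are free, and the vertices are pairwise distinct. -/
def IsAugPath {U V : Type*} (E M : Set (U × V)) (u : ℕ → U) (v : ℕ → V)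
    (m : ℕ) : Prop :=
  (∀ w, (u 0, w) ∉ M) ∧ (∀ w, (w, v m) ∉ M) ∧
  (∀ i ≤ m, (u i, v i) ∈ E ∧ (u i, v i) ∉ M) ∧
  (∀ i < m, (u (i + 1), v i) ∈ M) ∧
  (∀ i j, i ≤ m → j ≤ m → u i = u j → i = j) ∧
  (∀ i j, i ≤ m → j ≤ m → v i = v j → i = j)



theorem AuctionTrace.free_h_zero {U V : Type*} {E : Set (U × V)}
    (t : AuctionTrace U V E) : ∀ i v, (∀ u, (u, v) ∉ t.M i) → t.h i v = 0 := by
  intro i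
  induction i with
  | zero => intro v _; exact t.h_init v
  | succ i ih =>
    intro v hv
    rcases t.step i with ⟨_, hM, hh⟩ | ⟨u, j, hfr, hE, hmin, hM, hhj, hhw⟩
    · rw [hh]; exact ih v (fun a ha => hv a (hM ▸ ha))
    · have hvj : v ≠ j := fun h => hv u (by rw [hM, h]; exact Set.mem_insert _ _)
      rw [hhw v hvj]
      exact ih v (fun a ha => hv a (by rw [hM]; exact Set.mem_insert_iff.mpr (Or.inr ⟨ha, hvj⟩)))

theorem AuctionTrace.match_bound {U V : Type*} {E : Set (U × V)}
    (t : AuctionTrace U V E) : ∀ i a b w, (a, b) ∈ t.M i → (a, w) ∈ E →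
      t.h i b ≤ t.h i w + 1 := by
  intro i
  induction i with
  | zero => intro a b w hab _; rw [t.M_init] at hab; exact absurd hab (Set.notMem_empty _)
  | succ i ih =>
    intro a b w hab hw
    rcases t.step i with ⟨_, hM, hh⟩ | ⟨u, j, hfr, hE, hmin, hM, hhj, hhw⟩
    · rw [hh]; exact ih a b w (hM ▸ hab) hw
    · rw [hM] at hab
      rcases Set.mem_insert_iff.mp hab with heq | ⟨hmem, hne⟩
      · injection heq with ha hb
        rw [hb, hhj]
        by_cases hwj : w = j
        · rw [hwj, hhj]; omega
        · rw [hhw w hwj]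
          have := hmin w (ha ▸ hw)
          omega
      · have hbj : b ≠ j := hne
        rw [hhw b hbj]
        by_cases hwj : w = j
        · have := ih a b j hmem (hwj ▸ hw)
          rw [hwj, hhj]; omega
        · rw [hhw w hwj]; exact ih a b w hmem hw

/-- If at iteration `i` of the simplified auction algorithm
`u₀ ∈ U` is a free vertex with `n_{u₀} ⊆ D_l(i)`, then every augmenting path
of `M i` starting at `u₀` has length at least `2 l + 1` (in our encoding an
augmenting path with parameter `m` has length `2 m + 1`, so the claim is
`l ≤ m`). -/
theorem augPath_length_ge {U V : Type*} (E : Set (U × V))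
    (t : AuctionTrace U V E) (i l : ℕ) (u0 : U)
    (hfree : ∀ v, (u0, v) ∉ t.M i)
    (hn : ∀ w, (u0, w) ∈ E → l ≤ t.h i w) :
    ∀ (u : ℕ → U) (v : ℕ → V) (m : ℕ),
      IsAugPath E (t.M i) u v m → u 0 = u0 → l ≤ m := by
  intro u v m hpath hu0
  obtain ⟨hfreeU, hfreeV, hedge, hmatch, _, _⟩ := hpath
  have key : ∀ k, k ≤ m → l ≤ t.h i (v k) + k := by
    intro k
    induction k with
    | zero =>
      intro _
      have := hn (v 0) (by rw [← hu0]; exact (hedge 0 (Nat.zero_le m)).1)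
      omega
    | succ k ih =>
      intro hk
      have h1 := ih (by omega)
      have h2 : (u (k + 1), v k) ∈ t.M i := hmatch k (by omega)
      have h3 : (u (k + 1), v (k + 1)) ∈ E := (hedge (k + 1) hk).1
      have := t.match_bound i (u (k + 1)) (v k) (v (k + 1)) h2 h3
      omega
  have h0 : t.h i (v m) = 0 := t.free_h_zero i (v m) (fun w => hfreeV w)
  have := key m le_rfl
  omega
end

section
/- Suppose G=(U,V,E) is bipartite with |U|=|V|=N, G contains a perfect matching, and for every non-perfect matching M ⊆ E there exists an augmenting path for M of length at most 2l+1. Then at every iteration i of the simplified auction algorithm before termination, every free vertex u ∈ U has at least one neighbor j ∈ n_u with h_j(i) ≤ l. -/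
/-- Chain lemma: along an augmenting path the value drops by at most one per
step and the final vertex is free (value 0), so `h (v 0) ≤ m`. -/
lemma chain_bound {U V : Type*} {E M : Set (U × V)} {h : V → ℕ}
    (hB : ∀ a b, (a, b) ∈ M → ∀ w, (a, w) ∈ E → h b ≤ h w + 1)
    (hC : ∀ v, (∀ a, (a, v) ∉ M) → h v = 0)
    {us : ℕ → U} {vs : ℕ → V} {m : ℕ} (hp : IsAugPath E M us vs m) :
    h (vs 0) ≤ m := by
  obtain ⟨h1, h2, h3, h4, h5, h6⟩ := hp
  suffices H : ∀ d k, k + d = m → h (vs k) ≤ d by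
    exact H m 0 (by omega)
  intro d
  induction d with
  | zero =>
    intro k hk
    have hkm : k = m := by omega
    subst hkm
    have := hC (vs k) (fun a ha => h2 a ha)
    omega
  | succ d ihd =>
    intro k hk
    have hk' : k < m := by omega
    have hmatch := h4 k hk'
    have hedge := (h3 (k + 1) (by omega)).1
    have hstep := hB _ _ hmatch _ hedge
    have := ihd (k + 1) (by omega)
    omega

/-- Invariants of the auction trace: the current set of edges is a matching,
a matched vertex's value exceeds the values of its partner's neighbors by at
most one, and free vertices have value zero. -/
lemma trace_inv {U V : Type*} {E : Set (U × V)} (t : AuctionTrace U V E)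
    (i : ℕ) :
    IsMatching (t.M i) ∧
    (∀ a b, (a, b) ∈ t.M i → ∀ w, (a, w) ∈ E → t.h i b ≤ t.h i w + 1) ∧
    (∀ v, (∀ a, (a, v) ∉ t.M i) → t.h i v = 0) := by
  induction i with
  | zero =>
    refine ⟨⟨?_, ?_⟩, ?_, ?_⟩ <;> simp [t.M_init, t.h_init]
  | succ i ihh =>
    obtain ⟨⟨hm1, hm2⟩, hB, hC⟩ := ihh
    rcases t.step i with ⟨_, hMeq, hheq⟩ | ⟨u₀, j, hfree, hjE, hmin, hMeq, hhj, hhw⟩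
    · rw [hMeq, hheq]; exact ⟨⟨hm1, hm2⟩, hB, hC⟩
    · have hmono : ∀ w, t.h i w ≤ t.h (i + 1) w := by
        intro w
        by_cases hw : w = j
        · subst hw; omega
        · rw [hhw w hw]
      have hmem : ∀ e : U × V, e ∈ t.M (i + 1) ↔
          e = (u₀, j) ∨ (e ∈ t.M i ∧ e.2 ≠ j) := by
        intro e
        rw [hMeq]
        simp [Set.mem_insert_iff, Set.mem_setOf_eq]
      refine ⟨⟨?_, ?_⟩, ?_, ?_⟩
      · intro a b b' hb hb'
        rcases (hmem _).1 hb with he | ⟨he, hne⟩ <;>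
          rcases (hmem _).1 hb' with he' | ⟨he', hne'⟩
        · rw [Prod.mk.injEq] at he he'
          rw [he.2, he'.2]
        · exfalso
          rw [Prod.mk.injEq] at he
          exact hfree b' (he.1 ▸ he')
        · exfalso
          rw [Prod.mk.injEq] at he'
          exact hfree b (he'.1 ▸ he)
        · exact hm1 a b b' he he'
      · intro a a' b hb hb'
        rcases (hmem _).1 hb with he | ⟨he, hne⟩ <;>
          rcases (hmem _).1 hb' with he' | ⟨he', hne'⟩
        · rw [Prod.mk.injEq] at he he'
          rw [he.1, he'.1]
        · exfalso
          rw [Prod.mk.injEq] at he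
          exact hne' he.2
        · exfalso
          rw [Prod.mk.injEq] at he'
          exact hne he'.2
        · exact hm2 a a' b he he'
      · intro a b hb w hw
        rcases (hmem _).1 hb with he | ⟨he, hne⟩
        · rw [Prod.mk.injEq] at he
          have hb2 : b = j := he.2
          subst hb2
          have ha2 : a = u₀ := he.1
          subst ha2
          have := hmin w hw
          have := hmono w
          omega
        · have hbj : t.h (i + 1) b = t.h i b := hhw b hne
          have := hB a b he w hw
          have := hmono w
          omega
      · intro v hv
        by_cases hvj : v = j
        · exact absurd (hv u₀ (by rw [hvj]; exact (hmem (u₀, j)).2 (Or.inl rfl))) not_false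
        · have hfree' : ∀ a, (a, v) ∉ t.M i := by
            intro a ha
            exact hv a ((hmem (a, v)).2 (Or.inr ⟨ha, hvj⟩))
          rw [hhw v hvj]
          exact hC v hfree'

/-- The contradiction engine: if a free vertex `u` has all its neighbors of
value at least `l + 1`, we can keep performing bids by starts of short
augmenting paths, preserving all invariants while strictly decreasing the
measure `∑ v, (l + 1 - h v)`; eventually the short augmenting path must start
at `u`, contradicting the chain lemma. -/
lemma engine {U V : Type*} [Fintype U] [Fintype V] {E : Set (U × V)} {l : ℕ}
    (haug : ∀ M ⊆ E, IsMatching M → (∃ u : U, ∀ v : V, (u, v) ∉ M) →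
      ∃ (us : ℕ → U) (vs : ℕ → V) (m : ℕ), IsAugPath E M us vs m ∧ m ≤ l)
    (u : U) :
    ∀ (n : ℕ) (M : Set (U × V)) (h : V → ℕ),
      (∑ v : V, (l + 1 - h v)) = n →
      M ⊆ E → IsMatching M →
      (∀ a b, (a, b) ∈ M → ∀ w, (a, w) ∈ E → h b ≤ h w + 1) →
      (∀ v, (∀ a, (a, v) ∉ M) → h v = 0) →
      (∀ w, (u, w) ∉ M) →
      (∀ w, (u, w) ∈ E → l + 1 ≤ h w) → False := by
  classical
  intro n
  induction n using Nat.strong_induction_on with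
  | _ n ih =>
  intro M h hsum hME hmat hB hC hufree hbad
  obtain ⟨us, vs, m, hp, hm⟩ := haug M hME hmat ⟨u, hufree⟩
  have hv0 : h (vs 0) ≤ m := chain_bound hB hC hp
  obtain ⟨h1, h2, h3, h4, h5, h6⟩ := hp
  have hv0E : (us 0, vs 0) ∈ E := (h3 0 (Nat.zero_le m)).1
  by_cases hu : us 0 = u
  · have := hbad (vs 0) (hu ▸ hv0E)
    omega
  -- choose the minimum-value neighbor j of us 0
  set s : Finset V := Finset.univ.filter (fun w => (us 0, w) ∈ E) with hs
  have hsne : s.Nonempty := ⟨vs 0, by simp [hs, hv0E]⟩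
  obtain ⟨j, hjs, hjmin⟩ := s.exists_min_image h hsne
  have hjE : (us 0, j) ∈ E := by simpa [hs] using hjs
  have hjmin' : ∀ w, (us 0, w) ∈ E → h j ≤ h w := fun w hw =>
    hjmin w (by simp [hs, hw])
  have hjl : h j ≤ l := le_trans (hjmin' _ hv0E) (le_trans hv0 hm)
  -- the new matching and new values after the bid of us 0 on j
  set M' : Set (U × V) := insert (us 0, j) {e ∈ M | e.2 ≠ j} with hM'
  set h' : V → ℕ := fun v => if v = j then h j + 1 else h v with hh'
  have hmem : ∀ e : U × V, e ∈ M' ↔ e = (us 0, j) ∨ (e ∈ M ∧ e.2 ≠ j) := by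
    intro e
    rw [hM']
    simp [Set.mem_insert_iff, Set.mem_setOf_eq]
  have hmono : ∀ v, h v ≤ h' v := by
    intro v
    rw [hh']
    dsimp only
    split
    · rename_i hvj; rw [hvj]; omega
    · exact le_refl _
  have hh'j : h' j = h j + 1 := by rw [hh']; simp
  have hh'ne : ∀ v, v ≠ j → h' v = h v := by
    intro v hv; rw [hh']; simp [hv]
  have hME' : M' ⊆ E := by
    intro e he
    rcases (hmem e).1 he with he' | ⟨he', _⟩
    · rw [he']; exact hjE
    · exact hME he'
  have hmat' : IsMatching M' := by
    constructor
    · intro a b b' hb hb'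
      rcases (hmem _).1 hb with he | ⟨he, hne⟩ <;>
        rcases (hmem _).1 hb' with he' | ⟨he', hne'⟩
      · rw [Prod.mk.injEq] at he he'
        rw [he.2, he'.2]
      · exfalso
        rw [Prod.mk.injEq] at he
        exact h1 b' (he.1 ▸ he')
      · exfalso
        rw [Prod.mk.injEq] at he'
        exact h1 b (he'.1 ▸ he)
      · exact hmat.1 a b b' he he'
    · intro a a' b hb hb'
      rcases (hmem _).1 hb with he | ⟨he, hne⟩ <;>
        rcases (hmem _).1 hb' with he' | ⟨he', hne'⟩
      · rw [Prod.mk.injEq] at he he'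
        rw [he.1, he'.1]
      · exfalso
        rw [Prod.mk.injEq] at he
        exact hne' he.2
      · exfalso
        rw [Prod.mk.injEq] at he'
        exact hne he'.2
      · exact hmat.2 a a' b he he'
  have hB' : ∀ a b, (a, b) ∈ M' → ∀ w, (a, w) ∈ E → h' b ≤ h' w + 1 := by
    intro a b hab w hw
    rcases (hmem _).1 hab with he | ⟨he, hne⟩
    · rw [Prod.mk.injEq] at he
      have := hjmin' w (he.1 ▸ hw)
      have := hmono w
      rw [he.2, hh'j]
      omega
    · rw [hh'ne b hne]
      have := hB a b he w hw
      have := hmono w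
      omega
  have hC' : ∀ v, (∀ a, (a, v) ∉ M') → h' v = 0 := by
    intro v hv
    have hvj : v ≠ j := by
      intro hvj
      subst hvj
      exact hv (us 0) ((hmem (us 0, v)).2 (Or.inl rfl))
    rw [hh'ne v hvj]
    refine hC v fun a ha => hv a ((hmem (a, v)).2 (Or.inr ⟨ha, hvj⟩))
  have hufree' : ∀ w, (u, w) ∉ M' := by
    intro w hw
    rcases (hmem _).1 hw with he | ⟨he, _⟩
    · rw [Prod.mk.injEq] at he
      exact hu he.1.symm
    · exact hufree w he
  have hbad' : ∀ w, (u, w) ∈ E → l + 1 ≤ h' w := by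
    intro w hw
    exact le_trans (hbad w hw) (hmono w)
  have hlt : (∑ v : V, (l + 1 - h' v)) < n := by
    rw [← hsum]
    refine Finset.sum_lt_sum (fun v _ => Nat.sub_le_sub_left (hmono v) _) ?_
    refine ⟨j, Finset.mem_univ j, ?_⟩
    rw [hh'j]
    omega
  exact ih _ hlt M' h' rfl hME' hmat' hB' hC' hufree' hbad'

/-- Suppose `G = (U, V, E)` is bipartite with `|U| = |V| = N`,
`G` contains a perfect matching, and every non-perfect matching `M ⊆ E` admits
an augmenting path of length at most `2 l + 1` (parameter `m ≤ l` in our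
encoding).  Then at every iteration `i` of the simplified auction algorithm,
every free vertex `u ∈ U` has at least one neighbor `j` with `h i j ≤ l`. -/
theorem free_vertex_has_low_neighbor {U V : Type*} [Fintype U] [Fintype V]
    (N : ℕ) (hU : Fintype.card U = N) (hV : Fintype.card V = N)
    (E : Set (U × V)) (l : ℕ)
    (hperfect : ∃ P ⊆ E, IsMatching P ∧ ∀ u : U, ∃ v : V, (u, v) ∈ P)
    (haug : ∀ M ⊆ E, IsMatching M → (∃ u : U, ∀ v : V, (u, v) ∉ M) →
      ∃ (u : ℕ → U) (v : ℕ → V) (m : ℕ), IsAugPath E M u v m ∧ m ≤ l)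
    (t : AuctionTrace U V E) :
    ∀ (i : ℕ) (u : U), (∀ v : V, (u, v) ∉ t.M i) →
      ∃ j : V, (u, j) ∈ E ∧ t.h i j ≤ l := by
  intro i u hufree
  by_contra hcon
  push_neg at hcon
  obtain ⟨hmat, hB, hC⟩ := trace_inv t i
  exact engine haug u (∑ v : V, (l + 1 - t.h i v)) (t.M i) (t.h i) rfl
    (t.M_subset i) hmat hB hC hufree (fun w hw => hcon w hw)
end

section
/- Let G ∈ B(N,p) with p = c·log(N)/N, c > 2, and N sufficiently large. Then the expected number of iterations T of the simplified auction algorithm satisfies E(T) = O(N·log(N)/log(Np)). -/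
open MeasureTheory Filter

/-- Let `G ∈ B(N, p)` with `p = c log N / N`, `c > 2`, and `N`
sufficiently large.  Then the expected number of iterations `T` of the
simplified auction algorithm satisfies `E(T) = O(N log N / log (N p))`.
We formalize the conditioning argument: for each `N`, `T N` is the (random)
iteration count on a probability space `Ω N`, `A N` is the event that the
random graph has no perfect matching (with `ℙ(A N) ≤ 2 / N^(c-1)` for large
`N`, by Erdős–Rényi), `B N` the event `G ∉ B̃(N, p)` (with `ℙ(B N) ≤ N^(-γ)`
for large `N`, by Motwani); `T ≤ N (N - 1)` always and
`T ≤ c̃ N log N / log (N p) + N` off `A ∪ B`. -/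
theorem expected_iterations_bigO
    (c ctil γ : ℝ) (hc : 2 < c) (hctil : 0 < ctil) (hγ : 1 ≤ γ)
    (p : ℕ → ℝ) (hp : ∀ N : ℕ, p N = c * Real.log N / N)
    (Ω : ℕ → Type) (mΩ : ∀ N, MeasurableSpace (Ω N))
    (ℙ : ∀ N, Measure (Ω N)) (hprob : ∀ N, IsProbabilityMeasure (ℙ N))
    (T : ∀ N, Ω N → ℕ) (hTmeas : ∀ N, Measurable (T N))
    (A B : ∀ N, Set (Ω N))
    (hAmeas : ∀ N, MeasurableSet (A N)) (hBmeas : ∀ N, MeasurableSet (B N))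
    (hA : ∀ᶠ N : ℕ in atTop, ((ℙ N) (A N)).toReal ≤ 2 / (N : ℝ) ^ (c - 1))
    (hB : ∀ᶠ N : ℕ in atTop, ((ℙ N) (B N)).toReal ≤ (N : ℝ) ^ (-γ))
    (hT1 : ∀ (N : ℕ) (ω : Ω N), (T N ω : ℝ) ≤ N * (N - 1))
    (hT2 : ∀ (N : ℕ), ∀ ω ∉ A N ∪ B N,
      (T N ω : ℝ) ≤ ctil * N * Real.log N / Real.log (N * p N) + N) :
    ∃ C : ℝ, 0 < C ∧ ∀ᶠ N : ℕ in atTop,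
      (∫ ω, (T N ω : ℝ) ∂(ℙ N)) ≤
        C * (N * Real.log N / Real.log (N * p N)) := by
  have hc0 : (0:ℝ) < c := by linarith
  refine ⟨ctil + 4, by positivity, ?_⟩
  -- eventually `c * log N ≤ N`
  have hev1 : ∀ᶠ N : ℕ in atTop, c * Real.log N ≤ N := by
    have h := Real.isLittleO_log_id_atTop.bound (show (0:ℝ) < 1/c by positivity)
    have h2 := (tendsto_natCast_atTop_atTop (R := ℝ)).eventually h
    filter_upwards [h2, eventually_ge_atTop 1] with N hN hN1
    have hN1' : (1:ℝ) ≤ N := by exact_mod_cast hN1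
    have hlnn : (0:ℝ) ≤ Real.log N := Real.log_nonneg hN1'
    simp only [id, Real.norm_eq_abs] at hN
    have : Real.log N ≤ (1/c) * N := by
      calc Real.log N ≤ |Real.log N| := le_abs_self _
        _ ≤ (1/c) * |(N:ℝ)| := hN
        _ = (1/c) * N := by rw [abs_of_nonneg (by linarith)]
    have := mul_le_mul_of_nonneg_left this hc0.le
    calc c * Real.log N ≤ c * ((1/c) * N) := this
      _ = N := by field_simp
  filter_upwards [hA, hB, hev1, eventually_ge_atTop 3] with N hAN hBN hcN hN3
  have hN3' : (3:ℝ) ≤ N := by exact_mod_cast hN3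
  have hNpos : (0:ℝ) < N := by linarith
  have hN1' : (1:ℝ) ≤ N := by linarith
  have hlogN1 : (1:ℝ) ≤ Real.log N := by
    rw [show (1:ℝ) = Real.log (Real.exp 1) by rw [Real.log_exp]]
    apply Real.log_le_log (Real.exp_pos 1)
    calc Real.exp 1 ≤ 2.7182818286 := Real.exp_one_lt_d9.le
      _ ≤ N := by linarith
  have hNp : (N:ℝ) * p N = c * Real.log N := by
    rw [hp]; field_simp
  have hclog2 : (2:ℝ) < c * Real.log N := by nlinarith
  have hlogNp_pos : 0 < Real.log ((N:ℝ) * p N) := by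
    rw [hNp]; exact Real.log_pos (by linarith)
  have hlogNp_le : Real.log ((N:ℝ) * p N) ≤ Real.log N := by
    rw [hNp]; exact Real.log_le_log (by linarith) hcN
  set L : ℝ := Real.log ((N:ℝ) * p N) with hL
  set X : ℝ := (N:ℝ) * Real.log N / L with hX
  have hXN : (N:ℝ) ≤ X := by
    rw [hX, le_div_iff₀ hlogNp_pos]; nlinarith
  -- integrability
  have hmeasT : Measurable (fun ω => (T N ω : ℝ)) :=
    measurable_from_top.comp (hTmeas N)
  have hTnn : ∀ ω, (0:ℝ) ≤ (T N ω : ℝ) := fun ω => Nat.cast_nonneg _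
  have hInt : Integrable (fun ω => (T N ω : ℝ)) (ℙ N) := by
    refine (integrable_const ((N:ℝ) * ((N:ℝ) - 1))).mono'
      hmeasT.aestronglyMeasurable ?_
    exact ae_of_all _ fun ω => by
      rw [Real.norm_eq_abs, abs_of_nonneg (hTnn ω)]; exact hT1 N ω
  haveI := hprob N
  set S : Set (Ω N) := A N ∪ B N with hSdef
  have hSmeas : MeasurableSet S := (hAmeas N).union (hBmeas N)
  have hsplit := integral_add_compl hSmeas hInt
  -- bound on the bad set
  have h1 : ∫ ω in S, (T N ω : ℝ) ∂(ℙ N) ≤ (N:ℝ) * N * ((ℙ N) S).toReal := by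
    have hb : ∀ ω ∈ S, ‖(T N ω : ℝ)‖ ≤ (N:ℝ) * N := by
      intro ω _
      rw [Real.norm_eq_abs, abs_of_nonneg (hTnn ω)]
      nlinarith [hT1 N ω]
    have := norm_setIntegral_le_of_norm_le_const (measure_lt_top (ℙ N) _) hb
    calc ∫ ω in S, (T N ω : ℝ) ∂(ℙ N) ≤ ‖∫ ω in S, (T N ω : ℝ) ∂(ℙ N)‖ :=
          le_abs_self _
      _ ≤ (N:ℝ) * N * ((ℙ N) S).toReal := this
  -- bound on the good set
  have hM0 : (0:ℝ) ≤ ctil * N * Real.log N / L + N := by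
    have : ctil * N * Real.log N / L = ctil * X := by rw [hX]; ring
    rw [this]; nlinarith
  have h2 : ∫ ω in Sᶜ, (T N ω : ℝ) ∂(ℙ N) ≤ ctil * N * Real.log N / L + N := by
    have hb : ∀ ω ∈ Sᶜ, ‖(T N ω : ℝ)‖ ≤ ctil * N * Real.log N / L + N := by
      intro ω hω
      rw [Real.norm_eq_abs, abs_of_nonneg (hTnn ω)]
      exact hT2 N ω hω
    have hbd := norm_setIntegral_le_of_norm_le_const (measure_lt_top (ℙ N) _) hb
    have hP1 : ((ℙ N) Sᶜ).toReal ≤ 1 := by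
      have := ENNReal.toReal_mono ENNReal.one_ne_top (prob_le_one (μ := ℙ N) (s := Sᶜ))
      simpa using this
    calc ∫ ω in Sᶜ, (T N ω : ℝ) ∂(ℙ N) ≤ ‖∫ ω in Sᶜ, (T N ω : ℝ) ∂(ℙ N)‖ :=
          le_abs_self _
      _ ≤ (ctil * N * Real.log N / L + N) * ((ℙ N) Sᶜ).toReal := hbd
      _ ≤ (ctil * N * Real.log N / L + N) * 1 :=
          mul_le_mul_of_nonneg_left hP1 hM0
      _ = ctil * N * Real.log N / L + N := by ring
  -- probability of the bad set
  have hPS : ((ℙ N) S).toReal ≤ 2 / (N:ℝ) ^ (c - 1) + (N:ℝ) ^ (-γ) := by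
    calc ((ℙ N) S).toReal ≤ ((ℙ N) (A N) + (ℙ N) (B N)).toReal :=
          ENNReal.toReal_mono (by finiteness) (measure_union_le _ _)
      _ = ((ℙ N) (A N)).toReal + ((ℙ N) (B N)).toReal :=
          ENNReal.toReal_add (measure_ne_top _ _) (measure_ne_top _ _)
      _ ≤ 2 / (N:ℝ) ^ (c - 1) + (N:ℝ) ^ (-γ) := add_le_add hAN hBN
  -- rpow arithmetic
  have e1 : (N:ℝ) * N * (2 / (N:ℝ) ^ (c - 1)) ≤ 2 * N := by
    have hmul : (N:ℝ) ^ ((3:ℝ) - c) * (N:ℝ) ^ (c - 1) = (N:ℝ) * N := by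
      rw [← Real.rpow_add hNpos,
        show (3:ℝ) - c + (c - 1) = ((2:ℕ):ℝ) by push_cast; ring,
        Real.rpow_natCast]
      ring
    have hP : (0:ℝ) < (N:ℝ) ^ (c - 1) := Real.rpow_pos_of_pos hNpos _
    have : (N:ℝ) * N * (2 / (N:ℝ) ^ (c - 1)) = 2 * (N:ℝ) ^ ((3:ℝ) - c) := by
      rw [← hmul]; field_simp
    rw [this]
    have := Real.rpow_le_rpow_of_exponent_le hN1'
      (show (3:ℝ) - c ≤ 1 by linarith)
    calc 2 * (N:ℝ) ^ ((3:ℝ) - c) ≤ 2 * (N:ℝ) ^ (1:ℝ) := by linarith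
      _ = 2 * N := by rw [Real.rpow_one]
  have e2 : (N:ℝ) * N * (N:ℝ) ^ (-γ) ≤ N := by
    have hmul : (N:ℝ) ^ ((2:ℝ) - γ) * (N:ℝ) ^ γ = (N:ℝ) * N := by
      rw [← Real.rpow_add hNpos,
        show (2:ℝ) - γ + γ = ((2:ℕ):ℝ) by push_cast; ring,
        Real.rpow_natCast]
      ring
    have hP : (0:ℝ) < (N:ℝ) ^ γ := Real.rpow_pos_of_pos hNpos _
    have : (N:ℝ) * N * (N:ℝ) ^ (-γ) = (N:ℝ) ^ ((2:ℝ) - γ) := by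
      rw [← hmul, Real.rpow_neg hNpos.le]; field_simp
    rw [this]
    calc (N:ℝ) ^ ((2:ℝ) - γ) ≤ (N:ℝ) ^ (1:ℝ) :=
          Real.rpow_le_rpow_of_exponent_le hN1' (by linarith)
      _ = N := Real.rpow_one _
  -- put everything together
  have hNN0 : (0:ℝ) ≤ (N:ℝ) * N := by positivity
  have hbad : (N:ℝ) * N * ((ℙ N) S).toReal ≤ 3 * N := by
    calc (N:ℝ) * N * ((ℙ N) S).toReal
        ≤ (N:ℝ) * N * (2 / (N:ℝ) ^ (c - 1) + (N:ℝ) ^ (-γ)) :=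
          mul_le_mul_of_nonneg_left hPS hNN0
      _ = (N:ℝ) * N * (2 / (N:ℝ) ^ (c - 1)) + (N:ℝ) * N * (N:ℝ) ^ (-γ) := by
          ring
      _ ≤ 2 * N + N := add_le_add e1 e2
      _ = 3 * N := by ring
  have hctilX : ctil * N * Real.log N / L = ctil * X := by rw [hX]; ring
  calc (∫ ω, (T N ω : ℝ) ∂(ℙ N))
      = ∫ ω in S, (T N ω : ℝ) ∂(ℙ N) + ∫ ω in Sᶜ, (T N ω : ℝ) ∂(ℙ N) :=
        hsplit.symm
    _ ≤ (N:ℝ) * N * ((ℙ N) S).toReal + (ctil * N * Real.log N / L + N) :=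
        add_le_add h1 h2
    _ ≤ 3 * N + (ctil * X + N) := by rw [hctilX] at *; linarith
    _ ≤ (ctil + 4) * X := by nlinarith
end

section
/- Let G=(U,V,E) be bipartite with |U|=|V|=N containing a perfect matching, and suppose every non-perfect matching admits an augmenting path of length at most 2l+1. If at some iteration i a free vertex u satisfies n_u ⊆ D_{l+1}(i), then u can never be the starting vertex of an augmenting path at any later iteration j ≥ i, contradicting the existence of a perfect matching; hence no free vertex u ever has n_u ⊆ D_{l+1}(i). -/
namespace NFVaux

variable {U V : Type*}

/-- Augmenting a matching along an augmenting path. -/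
def augM (M : Set (U × V)) (a : ℕ → U) (b : ℕ → V) (m : ℕ) : Set (U × V) :=
  {e | (e ∈ M ∧ ¬ ∃ k, k < m ∧ e = (a (k + 1), b k)) ∨ ∃ k, k ≤ m ∧ e = (a k, b k)}

variable {E M : Set (U × V)} {a : ℕ → U} {b : ℕ → V} {m : ℕ}

lemma augM_subset (hME : M ⊆ E) (hp : IsAugPath E M a b m) : augM M a b m ⊆ E := by
  rintro e (⟨he, -⟩ | ⟨k, hk, rfl⟩)
  · exact hME he
  · exact (hp.2.2.1 k hk).1

lemma augM_start : (a 0, b 0) ∈ augM M a b m :=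
  Or.inr ⟨0, Nat.zero_le _, rfl⟩

lemma augM_mem_of {e : U × V} (he : e ∈ augM M a b m) :
    e ∈ M ∨ ∃ k, k ≤ m ∧ e = (a k, b k) := by
  rcases he with ⟨h, -⟩ | h
  · exact Or.inl h
  · exact Or.inr h

lemma augM_notMem {e : U × V} (he : e ∈ M) (hne : e ∉ augM M a b m) :
    ∃ k, k < m ∧ e = (a (k + 1), b k) := by
  by_contra h
  exact hne (Or.inl ⟨he, h⟩)

lemma augM_presU (hp : IsAugPath E M a b m) {x : U} {v : V} (hxv : (x, v) ∈ M) :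
    ∃ v', (x, v') ∈ augM M a b m := by
  by_cases h : ∃ k, k < m ∧ (x, v) = (a (k + 1), b k)
  · obtain ⟨k, hk, he⟩ := h
    have hx : x = a (k + 1) := congrArg Prod.fst he
    exact ⟨b (k + 1), Or.inr ⟨k + 1, by omega, by rw [hx]⟩⟩
  · exact ⟨v, Or.inl ⟨hxv, h⟩⟩

lemma augM_matching (hM : IsMatching M) (hp : IsAugPath E M a b m) :
    IsMatching (augM M a b m) := by
  obtain ⟨hp1, hp2, hp3, hp4, hp5, hp6⟩ := hp
  constructor
  · rintro x v v' (⟨hv, hnv⟩ | ⟨k, hk, hek⟩) (⟨hv', hnv'⟩ | ⟨k', hk', hek'⟩)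
    · exact hM.1 x v v' hv hv'
    · exfalso
      have hx : x = a k' := congrArg Prod.fst hek'
      rcases k' with _ | s
      · exact hp1 v (hx ▸ hv)
      · have hm1 : (a (s + 1), b s) ∈ M := hp4 s (by omega)
        have hvb : v = b s := hM.1 _ _ _ (hx ▸ hv) hm1
        exact hnv ⟨s, by omega, by rw [hx, hvb]⟩
    · exfalso
      have hx : x = a k := congrArg Prod.fst hek
      rcases k with _ | s
      · exact hp1 v' (hx ▸ hv')
      · have hm1 : (a (s + 1), b s) ∈ M := hp4 s (by omega)
        have hvb : v' = b s := hM.1 _ _ _ (hx ▸ hv') hm1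
        exact hnv' ⟨s, by omega, by rw [hx, hvb]⟩
    · have hx : x = a k := congrArg Prod.fst hek
      have hx' : x = a k' := congrArg Prod.fst hek'
      have hkk : k = k' := hp5 k k' hk hk' (hx ▸ hx')
      have hv1 : v = b k := congrArg Prod.snd hek
      have hv2 : v' = b k' := congrArg Prod.snd hek'
      rw [hv1, hv2, hkk]
  · rintro x x' v (⟨hv, hnv⟩ | ⟨k, hk, hek⟩) (⟨hv', hnv'⟩ | ⟨k', hk', hek'⟩)
    · exact hM.2 x x' v hv hv'
    · exfalso
      have hbv : v = b k' := congrArg Prod.snd hek'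
      rcases Nat.lt_or_ge k' m with hlt | hge
      · have hm1 : (a (k' + 1), b k') ∈ M := hp4 k' hlt
        have hxa : x = a (k' + 1) := hM.2 _ _ _ (hbv ▸ hv) hm1
        exact hnv ⟨k', hlt, by rw [hxa, hbv]⟩
      · have hkm : k' = m := by omega
        exact hp2 x (by rw [← hkm, ← hbv]; exact hv)
    · exfalso
      have hbv : v = b k := congrArg Prod.snd hek
      rcases Nat.lt_or_ge k m with hlt | hge
      · have hm1 : (a (k + 1), b k) ∈ M := hp4 k hlt
        have hxa : x' = a (k + 1) := hM.2 _ _ _ (hbv ▸ hv') hm1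
        exact hnv' ⟨k, hlt, by rw [hxa, hbv]⟩
      · have hkm : k = m := by omega
        exact hp2 x' (by rw [← hkm, ← hbv]; exact hv')
    · have hbv : v = b k := congrArg Prod.snd hek
      have hbv' : v = b k' := congrArg Prod.snd hek'
      have hkk : k = k' := hp6 k k' hk hk' (hbv ▸ hbv')
      have hx1 : x = a k := congrArg Prod.fst hek
      have hx2 : x' = a k' := congrArg Prod.fst hek'
      rw [hx1, hx2, hkk]

lemma augM_free (hp : IsAugPath E M a b m) {x : U} (hxf : ∀ v, (x, v) ∉ M)
    (hxa : x ≠ a 0) : ∀ v, (x, v) ∉ augM M a b m := by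
  rintro v (⟨hv, -⟩ | ⟨k, hk, he⟩)
  · exact hxf v hv
  · have hx : x = a k := congrArg Prod.fst he
    rcases k with _ | s
    · exact hxa hx
    · exact hxf (b s) (by rw [hx]; exact hp.2.2.2.1 s (by omega))

lemma augM_freeU (hM : IsMatching M) (hp : IsAugPath E M a b m) :
    {x : U | ∀ v, (x, v) ∉ augM M a b m} = {x : U | ∀ v, (x, v) ∉ M} \ {a 0} := by
  ext x
  simp only [Set.mem_setOf_eq, Set.mem_diff, Set.mem_singleton_iff]
  constructor
  · intro hf
    refine ⟨fun v hv => ?_, ?_⟩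
    · obtain ⟨v', hv'⟩ := augM_presU hp hv
      exact hf v' hv'
    · rintro rfl
      exact hf (b 0) augM_start
  · rintro ⟨hf, hne⟩
    exact augM_free hp hf hne

end NFVaux

namespace NFVaux

variable {U V : Type*}

lemma chase [Finite V] (E M M3 : Set (U × V)) (hM3E : M3 ⊆ E)
    (hM : IsMatching M) (hM3 : IsMatching M3)
    (hpres : ∀ x v, (x, v) ∈ M → ∃ v', (x, v') ∈ M3)
    (z : U) (hzf : ∀ v, (z, v) ∉ M) (hzm : ∃ v, (z, v) ∈ M3) :
    ∃ (x : ℕ → U) (v : ℕ → V) (K : ℕ), IsAugPath E M x v K ∧ x 0 = z ∧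
      ∀ j ≤ K, (x j, v j) ∈ M3 := by
  classical
  have hVne : Nonempty V := ⟨hzm.choose⟩
  let f : U → V := fun x => if h : ∃ w, (x, w) ∈ M3 then h.choose else Classical.arbitrary V
  let g : V → U := fun v => if h : ∃ x, (x, v) ∈ M then h.choose else z
  let x : ℕ → U := fun k => Nat.rec z (fun _ xk => g (f xk)) k
  let v : ℕ → V := fun k => f (x k)
  have hfdef : ∀ xx, (∃ w, (xx, w) ∈ M3) → (xx, f xx) ∈ M3 := by
    intro xx h
    simp only [f, dif_pos h]
    exact h.choose_spec
  have hgdef : ∀ vv, (∃ xx, (xx, vv) ∈ M) → (g vv, vv) ∈ M := by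
    intro vv h
    simp only [g, dif_pos h]
    exact h.choose_spec
  let alive : ℕ → Prop := fun k => ∀ j, j < k → ∃ xx, (xx, v j) ∈ M
  have halivemono : ∀ {k k' : ℕ}, k ≤ k' → alive k' → alive k :=
    fun h hk' j hj => hk' j (lt_of_lt_of_le hj h)
  have hmedge : ∀ k, alive (k + 1) → (x (k + 1), v k) ∈ M := by
    intro k hk
    exact hgdef (v k) (hk k (Nat.lt_succ_self k))
  have hm3edge : ∀ k, alive k → (x k, v k) ∈ M3 := by
    intro k
    induction k with
    | zero => intro _; exact hfdef z hzm
    | succ k _ =>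
      intro hk
      exact hfdef _ (hpres _ _ (hmedge k hk))
  have hvinj : ∀ j, ∀ k, j < k → alive k → v j = v k → False := by
    intro j
    induction j using Nat.strong_induction_on with
    | _ j ih =>
      intro k hjk hal heq
      have hxx : x j = x k :=
        hM3.2 (x j) (x k) (v j) (hm3edge j (halivemono (le_of_lt hjk) hal))
          (by rw [heq]; exact hm3edge k hal)
      rcases Nat.eq_zero_or_pos j with rfl | hj
      · obtain ⟨k', rfl⟩ : ∃ k', k = k' + 1 := ⟨k - 1, by omega⟩
        have h1 := hmedge k' hal
        rw [← hxx] at h1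
        exact hzf _ h1
      · obtain ⟨j', rfl⟩ : ∃ j', j = j' + 1 := ⟨j - 1, by omega⟩
        obtain ⟨k', rfl⟩ : ∃ k', k = k' + 1 := ⟨k - 1, by omega⟩
        have h1 : (x (j' + 1), v j') ∈ M := hmedge j' (halivemono (le_of_lt hjk) hal)
        have h2 : (x (k' + 1), v k') ∈ M := hmedge k' hal
        rw [hxx] at h1
        exact ih j' (Nat.lt_succ_self j') k' (by omega) (halivemono (by omega) hal)
          (hM.1 _ _ _ h1 h2)
  have hterm : ∃ K, alive K ∧ ∀ xx, (xx, v K) ∉ M := by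
    by_contra hno
    push_neg at hno
    have hall : ∀ k, alive k := by
      intro k
      induction k with
      | zero => intro j hj; omega
      | succ k ih =>
        intro j hj
        rcases Nat.lt_succ_iff_lt_or_eq.mp hj with h | heqjk
        · exact ih j h
        · rw [heqjk]
          exact hno k ih
    obtain ⟨p, q, hpq, heq⟩ := Finite.exists_ne_map_eq_of_infinite v
    rcases Nat.lt_or_ge p q with h | h
    · exact hvinj p q h (hall q) heq
    · exact hvinj q p (by omega) (hall p) heq.symm
  obtain ⟨K, halK, hKf⟩ := hterm
  refine ⟨x, v, K, ⟨?_, ?_, ?_, ?_, ?_, ?_⟩, rfl, fun j hj => hm3edge j (halivemono hj halK)⟩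
  · exact hzf
  · exact hKf
  · intro j hj
    refine ⟨hM3E (hm3edge j (halivemono hj halK)), ?_⟩
    intro hmem
    rcases Nat.eq_zero_or_pos j with rfl | hjpos
    · exact hzf _ hmem
    · obtain ⟨j', rfl⟩ : ∃ j', j = j' + 1 := ⟨j - 1, by omega⟩
      have h1 : (x (j' + 1), v j') ∈ M := hmedge j' (halivemono hj halK)
      exact hvinj j' (j' + 1) (Nat.lt_succ_self j') (halivemono hj halK)
        (hM.1 _ _ _ h1 hmem)
  · exact fun j hj => hmedge j (halivemono (by omega) halK)
  · intro p q hp hq hxeq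
    by_contra hne
    have key : ∀ p q : ℕ, p < q → q ≤ K → x p = x q → False := by
      intro p q hpq hqK hxeq
      obtain ⟨q', rfl⟩ : ∃ q', q = q' + 1 := ⟨q - 1, by omega⟩
      have h2 : (x (q' + 1), v q') ∈ M := hmedge q' (halivemono hqK halK)
      rcases Nat.eq_zero_or_pos p with rfl | hppos
      · rw [← hxeq] at h2
        exact hzf _ h2
      · obtain ⟨p', rfl⟩ : ∃ p', p = p' + 1 := ⟨p - 1, by omega⟩
        have h1 : (x (p' + 1), v p') ∈ M := hmedge p' (halivemono (by omega) halK)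
        rw [hxeq] at h1
        exact hvinj p' q' (by omega) (halivemono (by omega) halK) (hM.1 _ _ _ h1 h2)
    rcases Nat.lt_or_ge p q with h | h
    · exact key p q h hq hxeq
    · exact key q p (by omega) hp hxeq.symm
  · intro p q hp hq hveq
    by_contra hne
    rcases Nat.lt_or_ge p q with h | h
    · exact hvinj p q h (halivemono hq halK) hveq
    · exact hvinj q p (by omega) (halivemono hp halK) hveq.symm

end NFVaux

namespace NFVaux

variable {U V : Type*}

lemma chase_disj {E M M3 : Set (U × V)} (hM : IsMatching M) (hM3 : IsMatching M3)
    {x1 x2 : ℕ → U} {v1 v2 : ℕ → V} {K1 K2 : ℕ}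
    (hp1 : IsAugPath E M x1 v1 K1) (hp2 : IsAugPath E M x2 v2 K2)
    (hm31 : ∀ j ≤ K1, (x1 j, v1 j) ∈ M3) (hm32 : ∀ j ≤ K2, (x2 j, v2 j) ∈ M3)
    (hne : x1 0 ≠ x2 0) :
    (∀ j ≤ K1, ∀ j' ≤ K2, v1 j ≠ v2 j') ∧ (∀ j ≤ K1, ∀ j' ≤ K2, x1 j ≠ x2 j') := by
  have hv : ∀ j, j ≤ K1 → ∀ j' ≤ K2, v1 j = v2 j' → False := by
    intro j
    induction j using Nat.strong_induction_on with
    | _ j ih =>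
      intro hj j' hj' heq
      have hxx : x1 j = x2 j' := hM3.2 _ _ _ (hm31 j hj) (by rw [heq]; exact hm32 j' hj')
      rcases Nat.eq_zero_or_pos j with rfl | hjpos
      · rcases Nat.eq_zero_or_pos j' with rfl | hj'pos
        · exact hne hxx
        · obtain ⟨s, rfl⟩ : ∃ s, j' = s + 1 := ⟨j' - 1, by omega⟩
          have h2 : (x2 (s + 1), v2 s) ∈ M := hp2.2.2.2.1 s (by omega)
          rw [← hxx] at h2
          exact hp1.1 _ h2
      · obtain ⟨s, rfl⟩ : ∃ s, j = s + 1 := ⟨j - 1, by omega⟩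
        rcases Nat.eq_zero_or_pos j' with rfl | hj'pos
        · have h1 : (x1 (s + 1), v1 s) ∈ M := hp1.2.2.2.1 s (by omega)
          rw [hxx] at h1
          exact hp2.1 _ h1
        · obtain ⟨s', rfl⟩ : ∃ s', j' = s' + 1 := ⟨j' - 1, by omega⟩
          have h1 : (x1 (s + 1), v1 s) ∈ M := hp1.2.2.2.1 s (by omega)
          have h2 : (x2 (s' + 1), v2 s') ∈ M := hp2.2.2.2.1 s' (by omega)
          rw [hxx] at h1
          exact ih s (by omega) (by omega) s' (by omega) (hM.1 _ _ _ h1 h2)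
  refine ⟨fun j hj j' hj' heq => hv j hj j' hj' heq, ?_⟩
  intro j hj j' hj' heq
  rcases Nat.eq_zero_or_pos j with rfl | hjpos
  · rcases Nat.eq_zero_or_pos j' with rfl | hj'pos
    · exact hne heq
    · obtain ⟨s, rfl⟩ : ∃ s, j' = s + 1 := ⟨j' - 1, by omega⟩
      have h2 : (x2 (s + 1), v2 s) ∈ M := hp2.2.2.2.1 s (by omega)
      rw [← heq] at h2
      exact hp1.1 _ h2
  · obtain ⟨s, rfl⟩ : ∃ s, j = s + 1 := ⟨j - 1, by omega⟩
    rcases Nat.eq_zero_or_pos j' with rfl | hj'pos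
    · have h1 : (x1 (s + 1), v1 s) ∈ M := hp1.2.2.2.1 s (by omega)
      rw [heq] at h1
      exact hp2.1 _ h1
    · obtain ⟨s', rfl⟩ : ∃ s', j' = s' + 1 := ⟨j' - 1, by omega⟩
      have h1 : (x1 (s + 1), v1 s) ∈ M := hp1.2.2.2.1 s (by omega)
      have h2 : (x2 (s' + 1), v2 s') ∈ M := hp2.2.2.2.1 s' (by omega)
      rw [heq] at h1
      exact hv s (by omega) s' (by omega) (hM.1 _ _ _ h1 h2)

lemma count_paths {E M : Set (U × V)} {x1 x2 : ℕ → U} {v1 v2 : ℕ → V} {K1 K2 : ℕ}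
    (hp1 : IsAugPath E M x1 v1 K1) (hp2 : IsAugPath E M x2 v2 K2)
    (hvd : ∀ j ≤ K1, ∀ j' ≤ K2, v1 j ≠ v2 j')
    (T : Finset (U × V))
    (h1a : ∀ j ≤ K1, (x1 j, v1 j) ∈ T) (h1b : ∀ j < K1, (x1 (j + 1), v1 j) ∈ T)
    (h2a : ∀ j ≤ K2, (x2 j, v2 j) ∈ T) (h2b : ∀ j < K2, (x2 (j + 1), v2 j) ∈ T) :
    2 * K1 + 1 + (2 * K2 + 1) ≤ T.card := by
  classical
  set F1a : Finset (U × V) := (Finset.range (K1 + 1)).image (fun j => (x1 j, v1 j)) with hF1a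
  set F1b : Finset (U × V) := (Finset.range K1).image (fun j => (x1 (j + 1), v1 j)) with hF1b
  set F2a : Finset (U × V) := (Finset.range (K2 + 1)).image (fun j => (x2 j, v2 j)) with hF2a
  set F2b : Finset (U × V) := (Finset.range K2).image (fun j => (x2 (j + 1), v2 j)) with hF2b
  have c1a : F1a.card = K1 + 1 := by
    rw [hF1a, Finset.card_image_of_injOn, Finset.card_range]
    intro p hp q hq hpq
    exact hp1.2.2.2.2.2 p q (by have := Finset.mem_range.mp hp; omega)
      (by have := Finset.mem_range.mp hq; omega) (congrArg Prod.snd hpq)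
  have c1b : F1b.card = K1 := by
    rw [hF1b, Finset.card_image_of_injOn, Finset.card_range]
    intro p hp q hq hpq
    exact hp1.2.2.2.2.2 p q (by have := Finset.mem_range.mp hp; omega)
      (by have := Finset.mem_range.mp hq; omega) (congrArg Prod.snd hpq)
  have c2a : F2a.card = K2 + 1 := by
    rw [hF2a, Finset.card_image_of_injOn, Finset.card_range]
    intro p hp q hq hpq
    exact hp2.2.2.2.2.2 p q (by have := Finset.mem_range.mp hp; omega)
      (by have := Finset.mem_range.mp hq; omega) (congrArg Prod.snd hpq)
  have c2b : F2b.card = K2 := by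
    rw [hF2b, Finset.card_image_of_injOn, Finset.card_range]
    intro p hp q hq hpq
    exact hp2.2.2.2.2.2 p q (by have := Finset.mem_range.mp hp; omega)
      (by have := Finset.mem_range.mp hq; omega) (congrArg Prod.snd hpq)
  have d1 : Disjoint F1a F1b := by
    rw [Finset.disjoint_left]
    rintro e he1 he2
    obtain ⟨p, hp, hpe⟩ := Finset.mem_image.mp he1
    obtain ⟨q, hq, hqe⟩ := Finset.mem_image.mp he2
    rw [Finset.mem_range] at hp hq
    have hcomb : (x1 p, v1 p) = (x1 (q + 1), v1 q) := by rw [hpe, hqe]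
    have hpq : p = q := hp1.2.2.2.2.2 p q (by omega) (by omega) (congrArg Prod.snd hcomb)
    have : p = q + 1 := hp1.2.2.2.2.1 p (q + 1) (by omega) (by omega) (congrArg Prod.fst hcomb)
    omega
  have d2 : Disjoint F2a F2b := by
    rw [Finset.disjoint_left]
    rintro e he1 he2
    obtain ⟨p, hp, hpe⟩ := Finset.mem_image.mp he1
    obtain ⟨q, hq, hqe⟩ := Finset.mem_image.mp he2
    rw [Finset.mem_range] at hp hq
    have hcomb : (x2 p, v2 p) = (x2 (q + 1), v2 q) := by rw [hpe, hqe]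
    have hpq : p = q := hp2.2.2.2.2.2 p q (by omega) (by omega) (congrArg Prod.snd hcomb)
    have : p = q + 1 := hp2.2.2.2.2.1 p (q + 1) (by omega) (by omega) (congrArg Prod.fst hcomb)
    omega
  have sndleft : ∀ e ∈ F1a ∪ F1b, ∃ j ≤ K1, e.2 = v1 j := by
    intro e he
    rcases Finset.mem_union.mp he with h | h
    · obtain ⟨p, hp, hpe⟩ := Finset.mem_image.mp h
      rw [Finset.mem_range] at hp
      exact ⟨p, by omega, by rw [← hpe]⟩
    · obtain ⟨p, hp, hpe⟩ := Finset.mem_image.mp h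
      rw [Finset.mem_range] at hp
      exact ⟨p, by omega, by rw [← hpe]⟩
  have sndright : ∀ e ∈ F2a ∪ F2b, ∃ j ≤ K2, e.2 = v2 j := by
    intro e he
    rcases Finset.mem_union.mp he with h | h
    · obtain ⟨p, hp, hpe⟩ := Finset.mem_image.mp h
      rw [Finset.mem_range] at hp
      exact ⟨p, by omega, by rw [← hpe]⟩
    · obtain ⟨p, hp, hpe⟩ := Finset.mem_image.mp h
      rw [Finset.mem_range] at hp
      exact ⟨p, by omega, by rw [← hpe]⟩
  have dG : Disjoint (F1a ∪ F1b) (F2a ∪ F2b) := by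
    rw [Finset.disjoint_left]
    intro e he1 he2
    obtain ⟨j, hj, hje⟩ := sndleft e he1
    obtain ⟨j', hj', hje'⟩ := sndright e he2
    exact hvd j hj j' hj' (by rw [← hje, ← hje'])
  have hsub : F1a ∪ F1b ∪ (F2a ∪ F2b) ⊆ T := by
    intro e he
    rcases Finset.mem_union.mp he with h | h
    · rcases Finset.mem_union.mp h with h' | h'
      · obtain ⟨p, hp, hpe⟩ := Finset.mem_image.mp h'
        rw [Finset.mem_range] at hp
        exact hpe ▸ h1a p (by omega)
      · obtain ⟨p, hp, hpe⟩ := Finset.mem_image.mp h'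
        rw [Finset.mem_range] at hp
        exact hpe ▸ h1b p (by omega)
    · rcases Finset.mem_union.mp h with h' | h'
      · obtain ⟨p, hp, hpe⟩ := Finset.mem_image.mp h'
        rw [Finset.mem_range] at hp
        exact hpe ▸ h2a p (by omega)
      · obtain ⟨p, hp, hpe⟩ := Finset.mem_image.mp h'
        rw [Finset.mem_range] at hp
        exact hpe ▸ h2b p (by omega)
  have hcard : (F1a ∪ F1b ∪ (F2a ∪ F2b)).card = 2 * K1 + 1 + (2 * K2 + 1) := by
    rw [Finset.card_union_of_disjoint dG, Finset.card_union_of_disjoint d1,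
      Finset.card_union_of_disjoint d2, c1a, c1b, c2a, c2b]
    omega
  calc 2 * K1 + 1 + (2 * K2 + 1) = (F1a ∪ F1b ∪ (F2a ∪ F2b)).card := hcard.symm
    _ ≤ T.card := Finset.card_le_card hsub

end NFVaux

namespace NFVaux

variable {U V : Type*}

lemma trace_inv {E : Set (U × V)} (t : AuctionTrace U V E) (i : ℕ) :
    IsMatching (t.M i) ∧ (∀ v, (∀ x, (x, v) ∉ t.M i) → t.h i v = 0) ∧
    (∀ x v, (x, v) ∈ t.M i → ∀ w, (x, w) ∈ E → t.h i v ≤ t.h i w + 1) := by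
  induction i with
  | zero =>
    refine ⟨⟨?_, ?_⟩, ?_, ?_⟩
    · intro x v v' hv
      rw [t.M_init] at hv
      exact absurd hv (Set.notMem_empty _)
    · intro x x' v hv
      rw [t.M_init] at hv
      exact absurd hv (Set.notMem_empty _)
    · intro v _
      exact t.h_init v
    · intro x v hv
      rw [t.M_init] at hv
      exact absurd hv (Set.notMem_empty _)
  | succ i ih =>
    obtain ⟨ihm, ihf, ihs⟩ := ih
    rcases t.step i with ⟨-, hMeq, hheq⟩ | ⟨u', j, hufree, hjE, hmin, hMeq, hhj, hhw⟩
    · rw [hMeq, hheq]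
      exact ⟨ihm, ihf, ihs⟩
    · have hmem : ∀ e : U × V, e ∈ t.M (i + 1) ↔ e = (u', j) ∨ (e ∈ t.M i ∧ e.2 ≠ j) := by
        intro e
        rw [hMeq]
        simp [Set.mem_insert_iff, Set.mem_setOf_eq]
      refine ⟨⟨?_, ?_⟩, ?_, ?_⟩
      · intro x v v' hv hv'
        rcases (hmem _).mp hv with h1 | ⟨h1, h1j⟩ <;>
          rcases (hmem _).mp hv' with h2 | ⟨h2, h2j⟩
        · obtain ⟨hx1, hv1⟩ := Prod.mk.injEq _ _ _ _ ▸ h1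
          obtain ⟨hx2, hv2⟩ := Prod.mk.injEq _ _ _ _ ▸ h2
          rw [hv1, hv2]
        · exfalso
          obtain ⟨hx1, hv1⟩ := Prod.mk.injEq _ _ _ _ ▸ h1
          rw [hx1] at h2
          exact hufree v' h2
        · exfalso
          obtain ⟨hx2, hv2⟩ := Prod.mk.injEq _ _ _ _ ▸ h2
          rw [hx2] at h1
          exact hufree v h1
        · exact ihm.1 x v v' h1 h2
      · intro x x' v hv hv'
        rcases (hmem _).mp hv with h1 | ⟨h1, h1j⟩ <;>
          rcases (hmem _).mp hv' with h2 | ⟨h2, h2j⟩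
        · obtain ⟨hx1, hv1⟩ := Prod.mk.injEq _ _ _ _ ▸ h1
          obtain ⟨hx2, hv2⟩ := Prod.mk.injEq _ _ _ _ ▸ h2
          rw [hx1, hx2]
        · obtain ⟨hx1, hv1⟩ := Prod.mk.injEq _ _ _ _ ▸ h1
          exact absurd hv1 h2j
        · obtain ⟨hx2, hv2⟩ := Prod.mk.injEq _ _ _ _ ▸ h2
          exact absurd hv2 h1j
        · exact ihm.2 x x' v h1 h2
      · intro v hvfree
        have hvj : v ≠ j := by
          intro hvj
          exact hvfree u' ((hmem _).mpr (Or.inl (by rw [hvj])))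
        rw [hhw v hvj]
        refine ihf v (fun x hx => ?_)
        exact hvfree x ((hmem _).mpr (Or.inr ⟨hx, hvj⟩))
      · intro x v hv w hwE
        rcases (hmem _).mp hv with h1 | ⟨h1, h1j⟩
        · obtain ⟨hx, hvj⟩ := Prod.mk.injEq _ _ _ _ ▸ h1
          rw [hvj]
          by_cases hwj : w = j
          · rw [hwj]
            exact Nat.le_succ _
          · rw [hhj, hhw w hwj]
            rw [hx] at hwE
            have := hmin w hwE
            omega
        · rw [hhw v h1j]
          have hle := ihs x v h1 w hwE
          by_cases hwj : w = j
          · subst hwj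
            rw [hhj]
            omega
          · rw [hhw w hwj]
            exact hle

lemma key_lemma [Finite U] [Finite V]
    (E : Set (U × V)) (l : ℕ)
    (haug : ∀ M ⊆ E, IsMatching M → (∃ u : U, ∀ v : V, (u, v) ∉ M) →
      ∃ (x : ℕ → U) (v : ℕ → V) (m : ℕ), IsAugPath E M x v m ∧ m ≤ l)
    (u : U) :
    ∀ (n : ℕ) (M : Set (U × V)), M ⊆ E → IsMatching M → (∀ v, (u, v) ∉ M) →
      (∀ c d mR, IsAugPath E M c d mR → c 0 = u → l + 1 ≤ mR) →
      {x : U | ∀ v, (x, v) ∉ M}.ncard ≤ n → False := by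
  classical
  intro n
  induction n with
  | zero =>
    intro M hME hM hfree hS hcard
    have hu : u ∈ {x : U | ∀ v, (x, v) ∉ M} := hfree
    have hpos : 0 < {x : U | ∀ v, (x, v) ∉ M}.ncard :=
      (Set.ncard_pos (Set.toFinite _)).mpr ⟨u, hu⟩
    omega
  | succ n ih =>
    intro M hME hM hfree hS hcard
    have hex : ∃ m : ℕ, ∃ a bb, IsAugPath E M a bb m := by
      obtain ⟨a, bb, m0, hp, hm0⟩ := haug M hME hM ⟨u, hfree⟩
      exact ⟨m0, a, bb, hp⟩
    set mmin := Nat.find hex with hmmindef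
    obtain ⟨a, b, hq⟩ := Nat.find_spec hex
    have hmminle : mmin ≤ l := by
      obtain ⟨a', b', m0, hp, hm0⟩ := haug M hME hM ⟨u, hfree⟩
      exact le_trans (Nat.find_min' hex ⟨a', b', hp⟩) hm0
    have ha0u : a 0 ≠ u := by
      intro h
      have := hS a b mmin hq h
      omega
    set M' := augM M a b mmin with hM'def
    have hM'E : M' ⊆ E := augM_subset hME hq
    have hM'match : IsMatching M' := augM_matching hM hq
    have hufreeM' : ∀ v, (u, v) ∉ M' := augM_free hq hfree (fun h => ha0u h.symm)
    have hSM' : ∀ c d mR, IsAugPath E M' c d mR → c 0 = u → l + 1 ≤ mR := by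
      intro c d mR hR hc0
      by_contra hlt
      have hmRl : mR ≤ l := by omega
      set M3 := augM M' c d mR with hM3def
      have hM3E : M3 ⊆ E := augM_subset hM'E hR
      have hM3match : IsMatching M3 := augM_matching hM'match hR
      have hpres : ∀ x v, (x, v) ∈ M → ∃ v', (x, v') ∈ M3 := by
        intro x v hxv
        obtain ⟨v1, hv1⟩ := augM_presU hq hxv
        exact augM_presU hR hv1
      have huM3 : ∃ vv, (u, vv) ∈ M3 := ⟨d 0, by rw [← hc0]; exact augM_start⟩
      obtain ⟨x1, v1, K1, hpath1, hx10, hm31⟩ :=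
        chase E M M3 hM3E hM hM3match hpres u hfree huM3
      have hK1 : l + 1 ≤ K1 := hS x1 v1 K1 hpath1 hx10
      have ha0free : ∀ v, (a 0, v) ∉ M := hq.1
      have ha0M3 : ∃ vv, (a 0, vv) ∈ M3 := augM_presU hR augM_start
      obtain ⟨x2, v2, K2, hpath2, hx20, hm32⟩ :=
        chase E M M3 hM3E hM hM3match hpres (a 0) ha0free ha0M3
      have hK2 : mmin ≤ K2 := Nat.find_min' hex ⟨x2, v2, hpath2⟩
      have hnes : x1 0 ≠ x2 0 := by
        rw [hx10, hx20]
        exact fun h => ha0u h.symm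
      obtain ⟨hvd, hxd⟩ := chase_disj hM hM3match hpath1 hpath2 hm31 hm32 hnes
      -- the target finset
      set T : Finset (U × V) :=
        ((Finset.range (mmin + 1)).image fun k => (a k, b k)) ∪
        ((Finset.range mmin).image fun k => (a (k + 1), b k)) ∪
        ((Finset.range (mR + 1)).image fun k => (c k, d k)) ∪
        ((Finset.range mR).image fun k => (c (k + 1), d k)) with hTdef
      have hTcard : T.card ≤ 2 * mmin + 2 * mR + 2 := by
        have c1 : ((Finset.range (mmin + 1)).image fun k => (a k, b k)).card ≤ mmin + 1 :=
          le_trans Finset.card_image_le (le_of_eq (Finset.card_range _))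
        have c2 : ((Finset.range mmin).image fun k => (a (k + 1), b k)).card ≤ mmin :=
          le_trans Finset.card_image_le (le_of_eq (Finset.card_range _))
        have c3 : ((Finset.range (mR + 1)).image fun k => (c k, d k)).card ≤ mR + 1 :=
          le_trans Finset.card_image_le (le_of_eq (Finset.card_range _))
        have c4 : ((Finset.range mR).image fun k => (c (k + 1), d k)).card ≤ mR :=
          le_trans Finset.card_image_le (le_of_eq (Finset.card_range _))
        have u1 := Finset.card_union_le
          (((Finset.range (mmin + 1)).image fun k => (a k, b k)))
          (((Finset.range mmin).image fun k => (a (k + 1), b k)))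
        have u2 := Finset.card_union_le
          ((((Finset.range (mmin + 1)).image fun k => (a k, b k))) ∪
            (((Finset.range mmin).image fun k => (a (k + 1), b k))))
          (((Finset.range (mR + 1)).image fun k => (c k, d k)))
        have u3 := Finset.card_union_le
          ((((Finset.range (mmin + 1)).image fun k => (a k, b k))) ∪
            (((Finset.range mmin).image fun k => (a (k + 1), b k))) ∪
            (((Finset.range (mR + 1)).image fun k => (c k, d k))))
          (((Finset.range mR).image fun k => (c (k + 1), d k)))
        rw [hTdef]
        omega
      have hmemT : ∀ e : U × V, (e ∈ M ∧ e ∉ M3) ∨ (e ∈ M3 ∧ e ∉ M) → e ∈ T := by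
        rintro e (⟨heM, heM3⟩ | ⟨heM3, heM⟩)
        · by_cases h' : e ∈ M'
          · obtain ⟨k, hk, hke⟩ := augM_notMem h' heM3
            rw [hTdef, hke]
            exact Finset.mem_union_right _
              (Finset.mem_image.mpr ⟨k, Finset.mem_range.mpr hk, rfl⟩)
          · obtain ⟨k, hk, hke⟩ := augM_notMem heM h'
            rw [hTdef, hke]
            exact Finset.mem_union_left _ (Finset.mem_union_left _
              (Finset.mem_union_right _
                (Finset.mem_image.mpr ⟨k, Finset.mem_range.mpr hk, rfl⟩)))
        · rcases augM_mem_of heM3 with h' | ⟨k, hk, hke⟩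
          · rcases augM_mem_of h' with h'' | ⟨k, hk, hke⟩
            · exact absurd h'' heM
            · rw [hTdef, hke]
              exact Finset.mem_union_left _ (Finset.mem_union_left _
                (Finset.mem_union_left _
                  (Finset.mem_image.mpr ⟨k, Finset.mem_range.mpr (by omega), rfl⟩)))
          · rw [hTdef, hke]
            exact Finset.mem_union_left _ (Finset.mem_union_right _
              (Finset.mem_image.mpr ⟨k, Finset.mem_range.mpr (by omega), rfl⟩))
      have h1a : ∀ j ≤ K1, (x1 j, v1 j) ∈ T :=
        fun j hj => hmemT _ (Or.inr ⟨hm31 j hj, (hpath1.2.2.1 j hj).2⟩)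
      have h1b : ∀ j < K1, (x1 (j + 1), v1 j) ∈ T := by
        intro j hj
        refine hmemT _ (Or.inl ⟨hpath1.2.2.2.1 j hj, ?_⟩)
        intro hmem
        have h3 := hm31 (j + 1) (by omega)
        have hveq : v1 j = v1 (j + 1) := hM3match.1 _ _ _ hmem h3
        have := hpath1.2.2.2.2.2 j (j + 1) (by omega) (by omega) hveq
        omega
      have h2a : ∀ j ≤ K2, (x2 j, v2 j) ∈ T :=
        fun j hj => hmemT _ (Or.inr ⟨hm32 j hj, (hpath2.2.2.1 j hj).2⟩)
      have h2b : ∀ j < K2, (x2 (j + 1), v2 j) ∈ T := by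
        intro j hj
        refine hmemT _ (Or.inl ⟨hpath2.2.2.2.1 j hj, ?_⟩)
        intro hmem
        have h3 := hm32 (j + 1) (by omega)
        have hveq : v2 j = v2 (j + 1) := hM3match.1 _ _ _ hmem h3
        have := hpath2.2.2.2.2.2 j (j + 1) (by omega) (by omega) hveq
        omega
      have hcount := count_paths hpath1 hpath2 hvd T h1a h1b h2a h2b
      omega
    -- measure decreases
    have hfeq : {x : U | ∀ v, (x, v) ∉ M'} = {x : U | ∀ v, (x, v) ∉ M} \ {a 0} :=
      augM_freeU hM hq
    refine ih M' hM'E hM'match hufreeM' hSM' ?_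
    rw [hfeq]
    have hmem0 : a 0 ∈ {x : U | ∀ v, (x, v) ∉ M} := hq.1
    have hlt := Set.ncard_diff_singleton_lt_of_mem hmem0 (Set.toFinite _)
    omega

end NFVaux


/-- Let `G = (U, V, E)` be bipartite with `|U| = |V| = N`
containing a perfect matching, and suppose every non-perfect matching admits
an augmenting path of length at most `2 l + 1` (parameter `m ≤ l`).  Then:
(a) if at some iteration `i` a free vertex `u` satisfies `n_u ⊆ D_{l+1}(i)`,
then `u` is never the starting vertex of an augmenting path at any later
iteration `j ≥ i`; and (b) (since this contradicts the existence of a perfect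
matching) no free vertex `u` ever has `n_u ⊆ D_{l+1}(i)`. -/
theorem no_free_vertex_with_high_neighbors {U V : Type*} [Fintype U]
    [Fintype V] (N : ℕ) (hU : Fintype.card U = N) (hV : Fintype.card V = N)
    (E : Set (U × V)) (l : ℕ)
    (hperfect : ∃ P ⊆ E, IsMatching P ∧ ∀ u : U, ∃ v : V, (u, v) ∈ P)
    (haug : ∀ M ⊆ E, IsMatching M → (∃ u : U, ∀ v : V, (u, v) ∉ M) →
      ∃ (u : ℕ → U) (v : ℕ → V) (m : ℕ), IsAugPath E M u v m ∧ m ≤ l)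
    (t : AuctionTrace U V E) :
    (∀ (i : ℕ) (u : U), (∀ v : V, (u, v) ∉ t.M i) →
      (∀ w : V, (u, w) ∈ E → l + 1 ≤ t.h i w) →
      ∀ j, i ≤ j → ∀ (up : ℕ → U) (vp : ℕ → V) (m : ℕ),
        IsAugPath E (t.M j) up vp m → up 0 ≠ u) ∧
    (∀ (i : ℕ) (u : U), (∀ v : V, (u, v) ∉ t.M i) →
      ¬ ∀ w : V, (u, w) ∈ E → l + 1 ≤ t.h i w) := by
  classical
  have key : ∀ (i : ℕ) (u : U), (∀ v : V, (u, v) ∉ t.M i) →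
      (∀ w : V, (u, w) ∈ E → l + 1 ≤ t.h i w) → False := by
    intro i u hfree hhigh
    obtain ⟨hm, hf0, hsl⟩ := NFVaux.trace_inv t i
    have hS : ∀ c d mR, IsAugPath E (t.M i) c d mR → c 0 = u → l + 1 ≤ mR := by
      intro c d mR hp hc0
      obtain ⟨hp1, hp2, hp3, hp4, hp5, hp6⟩ := hp
      have hchain : ∀ k, k ≤ mR → t.h i (d (mR - k)) ≤ k := by
        intro k
        induction k with
        | zero =>
          intro _
          have h0 : t.h i (d mR) = 0 := hf0 (d mR) (fun x hx => hp2 x hx)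
          simp [h0]
        | succ k ihk =>
          intro hk
          have h1 : mR - (k + 1) < mR := by omega
          have h2 : mR - (k + 1) + 1 = mR - k := by omega
          have e1 : (c (mR - (k + 1) + 1), d (mR - (k + 1))) ∈ t.M i := hp4 _ h1
          have e2 : (c (mR - (k + 1) + 1), d (mR - (k + 1) + 1)) ∈ E := (hp3 _ (by omega)).1
          have h3 := hsl _ _ e1 _ e2
          rw [h2] at h3
          have h4 := ihk (by omega)
          omega
      have h5 := hchain mR le_rfl
      rw [Nat.sub_self] at h5
      have h6 : l + 1 ≤ t.h i (d 0) :=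
        hhigh (d 0) (by rw [← hc0]; exact (hp3 0 (Nat.zero_le _)).1)
      omega
    exact NFVaux.key_lemma E l haug u ({x : U | ∀ v, (x, v) ∉ t.M i}.ncard)
      (t.M i) (t.M_subset i) hm hfree hS le_rfl
  constructor
  · intro i u hfree hhigh j hij up vp m hpath
    exact (key i u hfree hhigh).elim
  · intro i u hfree hhigh
    exact key i u hfree hhigh
end
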